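/- Let p be a joint PMF on V^n (n > 1) with marginals p_j satisfying p_j(x*_j) > 1 - ε for all j, and q = ∏_j p_j. Then the total variation distance satisfies D_TV(p, q) = (1/2) Σ_z |p(z) - q(z)| < (3n - 1)ε / 2. -/

import Mathlib

open scoped BigOperators

/-- Weierstrass-type inequality: `1 - ∑ (1 - c i) ≤ ∏ c i` for `c i ∈ [0,1]`. -/
lemma aux_one_sub_sum_le_prod {ι : Type*} (s : Finset ι) (c : ι → ℝ)
    (h0 : ∀ i ∈ s, 0 ≤ c i) (h1 : ∀ i ∈ s, c i ≤ 1) :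
    1 - ∑ i ∈ s, (1 - c i) ≤ ∏ i ∈ s, c i := by
  classical
  induction s using Finset.induction with
  | empty => simp
  | @insert a t hat ih =>
    rw [Finset.sum_insert hat, Finset.prod_insert hat]
    have h0a : 0 ≤ c a := h0 a (Finset.mem_insert_self a t)
    have h1a : c a ≤ 1 := h1 a (Finset.mem_insert_self a t)
    have ih' := ih (fun i hi => h0 i (Finset.mem_insert_of_mem hi))
      (fun i hi => h1 i (Finset.mem_insert_of_mem hi))
    have hprod0 : 0 ≤ ∏ i ∈ t, c i :=
      Finset.prod_nonneg fun i hi => h0 i (Finset.mem_insert_of_mem hi)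
    have hprod1 : ∏ i ∈ t, c i ≤ 1 :=
      Finset.prod_le_one (fun i hi => h0 i (Finset.mem_insert_of_mem hi))
        (fun i hi => h1 i (Finset.mem_insert_of_mem hi))
    nlinarith [mul_le_mul_of_nonneg_left ih' h0a]

/-- For `n > 1`, under high-confidence marginals, the total variation
distance between the joint `p` and the product of marginals `q` satisfies
`D_TV(p,q) = (1/2) Σ_z |p(z) - q(z)| < (3n-1)ε/2`. -/
theorem stmt_7 {V : Type*} [Fintype V] [DecidableEq V] {n : ℕ} (hn : 1 < n)
    (p : (Fin n → V) → ℝ) (pm : Fin n → V → ℝ) (x' : Fin n → V) (ε : ℝ)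
    (hp0 : ∀ z, 0 ≤ p z) (hp1 : ∑ z : Fin n → V, p z = 1)
    (hm : ∀ j v, pm j v = ∑ z : Fin n → V, if z j = v then p z else 0)
    (hconf : ∀ j, pm j (x' j) > 1 - ε) (hε : 0 < ε) :
    (1 / 2) * (∑ z : Fin n → V, |p z - ∏ j, pm j (z j)|) <
      (3 * (n : ℝ) - 1) * ε / 2 := by
  classical
  haveI : Nonempty (Fin n) := ⟨⟨0, by omega⟩⟩
  set q : (Fin n → V) → ℝ := fun z => ∏ j, pm j (z j) with hqdef
  -- basic facts about marginals
  have hpm0 : ∀ j v, 0 ≤ pm j v := by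
    intro j v; rw [hm]
    exact Finset.sum_nonneg fun z _ => by split; exacts [hp0 z, le_rfl]
  have hmsum : ∀ j, ∑ v : V, pm j v = 1 := by
    intro j
    simp only [hm]
    rw [Finset.sum_comm]
    rw [← hp1]
    exact Finset.sum_congr rfl fun z _ => by simp
  have hpm1 : ∀ j v, pm j v ≤ 1 := by
    intro j v
    rw [← hmsum j]
    exact Finset.single_le_sum (fun v _ => hpm0 j v) (Finset.mem_univ v)
  have hq0 : ∀ z, 0 ≤ q z := fun z => Finset.prod_nonneg fun j _ => hpm0 j (z j)
  have hq1 : ∑ z : Fin n → V, q z = 1 := by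
    have := Finset.sum_prod_piFinset (Finset.univ : Finset V) pm
    rw [Fintype.piFinset_univ] at this
    rw [hqdef, this]
    simp [hmsum]
  -- p x' ≤ pm j (x' j)
  have hple : ∀ j, p x' ≤ pm j (x' j) := by
    intro j
    rw [hm]
    have := Finset.single_le_sum
      (f := fun z : Fin n → V => if z j = x' j then p z else 0)
      (fun z _ => by split; exacts [hp0 z, le_rfl]) (Finset.mem_univ x')
    simpa using this
  set s : ℝ := ∑ j : Fin n, (1 - pm j (x' j)) with hsdef
  have hdpos : ∀ j : Fin n, 1 - pm j (x' j) < ε := fun j => by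
    have := hconf j; linarith
  have hdnonneg : ∀ j : Fin n, 0 ≤ 1 - pm j (x' j) := fun j => by
    have := hpm1 j (x' j); linarith
  have hslt : s < (n : ℝ) * ε := by
    calc s < ∑ _j : Fin n, ε := by
            apply Finset.sum_lt_sum_of_nonempty
            · exact Finset.univ_nonempty
            · exact fun j _ => hdpos j
      _ = (n : ℝ) * ε := by simp [mul_comm]
  -- 1 - p x' ≤ s  (union bound)
  have ha : 1 - p x' ≤ s := by
    have hsum : s = ∑ z : Fin n → V, ∑ j : Fin n, (if z j = x' j then 0 else p z) := by
      rw [hsdef, Finset.sum_comm]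
      apply Finset.sum_congr rfl
      intro j _
      have : 1 - pm j (x' j)
          = ∑ z : Fin n → V, (p z - if z j = x' j then p z else 0) := by
        rw [Finset.sum_sub_distrib, hp1, ← hm]
      rw [this]
      apply Finset.sum_congr rfl
      intro z _
      split <;> simp
    have h1a : 1 - p x' = ∑ z ∈ Finset.univ.erase x', p z := by
      rw [← hp1, ← Finset.add_sum_erase _ p (Finset.mem_univ x')]; ring
    rw [h1a, hsum]
    rw [← Finset.add_sum_erase _ _ (Finset.mem_univ x')]
    have hx'0 : ∑ j : Fin n, (if x' j = x' j then 0 else p x') = 0 := by simp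
    rw [hx'0, zero_add]
    apply Finset.sum_le_sum
    intro z hz
    have hzne : z ≠ x' := Finset.ne_of_mem_erase hz
    obtain ⟨j0, hj0⟩ := Function.ne_iff.mp hzne
    have := Finset.single_le_sum
      (f := fun j : Fin n => if z j = x' j then 0 else p z)
      (fun j _ => by split; exacts [le_rfl, hp0 z]) (Finset.mem_univ j0)
    simpa [hj0] using this
  -- 1 - q x' ≤ s  (Weierstrass)
  have hb : 1 - q x' ≤ s := by
    have h := aux_one_sub_sum_le_prod Finset.univ (fun j => pm j (x' j))
      (fun j _ => hpm0 j (x' j)) (fun j _ => hpm1 j (x' j))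
    have hqx : q x' = ∏ j : Fin n, pm j (x' j) := rfl
    rw [hqx, hsdef]
    linarith
  -- q x' ≤ pm j0 (x' j0) for any j0
  obtain ⟨j0⟩ : Nonempty (Fin n) := ⟨⟨0, by omega⟩⟩
  have hqle : q x' ≤ pm j0 (x' j0) := by
    show ∏ j : Fin n, pm j (x' j) ≤ pm j0 (x' j0)
    rw [← Finset.mul_prod_erase _ _ (Finset.mem_univ j0)]
    have h1 : ∏ j ∈ Finset.univ.erase j0, pm j (x' j) ≤ 1 :=
      Finset.prod_le_one (fun j _ => hpm0 j (x' j)) (fun j _ => hpm1 j (x' j))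
    have h2 : 0 ≤ pm j0 (x' j0) := hpm0 j0 (x' j0)
    nlinarith
  -- |p x' - q x'| ≤ s - (1 - pm j0 (x' j0))
  have habs : |p x' - q x'| ≤ s - (1 - pm j0 (x' j0)) := by
    rw [abs_le]
    constructor
    · linarith [hple j0]
    · linarith [hple j0]
  -- s - (1 - pm j0 (x' j0)) < (n-1) * ε
  have hsd : s - (1 - pm j0 (x' j0)) < ((n : ℝ) - 1) * ε := by
    have herase : s - (1 - pm j0 (x' j0))
        = ∑ j ∈ Finset.univ.erase j0, (1 - pm j (x' j)) := by
      rw [hsdef, ← Finset.add_sum_erase _ _ (Finset.mem_univ j0)]; ring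
    rw [herase]
    have hcard : ((Finset.univ.erase j0).card : ℝ) = (n : ℝ) - 1 := by
      rw [Finset.card_erase_of_mem (Finset.mem_univ j0)]
      simp only [Finset.card_univ, Fintype.card_fin]
      have : 1 ≤ n := le_of_lt hn
      push_cast [Nat.cast_sub this]
      ring
    calc ∑ j ∈ Finset.univ.erase j0, (1 - pm j (x' j))
        < ∑ _j ∈ Finset.univ.erase j0, ε := by
          apply Finset.sum_lt_sum_of_nonempty
          · rw [← Finset.card_pos, Finset.card_erase_of_mem (Finset.mem_univ j0)]
            simp only [Finset.card_univ, Fintype.card_fin]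
            omega
          · exact fun j _ => hdpos j
      _ = ((n : ℝ) - 1) * ε := by rw [Finset.sum_const, nsmul_eq_mul, hcard]
  -- bound the tail sum
  have htail : ∑ z ∈ Finset.univ.erase x', |p z - q z| ≤ (1 - p x') + (1 - q x') := by
    have h1a : 1 - p x' = ∑ z ∈ Finset.univ.erase x', p z := by
      rw [← hp1, ← Finset.add_sum_erase _ p (Finset.mem_univ x')]; ring
    have h1b : 1 - q x' = ∑ z ∈ Finset.univ.erase x', q z := by
      rw [← hq1, ← Finset.add_sum_erase _ q (Finset.mem_univ x')]; ring
    rw [h1a, h1b, ← Finset.sum_add_distrib]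
    apply Finset.sum_le_sum
    intro z _
    have := hp0 z; have := hq0 z
    rw [abs_le]; constructor <;> linarith
  -- put everything together
  have hmain : ∑ z : Fin n → V, |p z - q z| < (3 * (n : ℝ) - 1) * ε := by
    rw [← Finset.add_sum_erase _ _ (Finset.mem_univ x')]
    have : (3 * (n : ℝ) - 1) * ε = ((n : ℝ) - 1) * ε + 2 * ((n : ℝ) * ε) := by ring
    rw [this]
    have h1 : |p x' - q x'| < ((n : ℝ) - 1) * ε := lt_of_le_of_lt habs hsd
    have h2 : (1 - p x') + (1 - q x') ≤ 2 * s := by linarith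
    have h3 : 2 * s < 2 * ((n : ℝ) * ε) := by linarith
    calc |p x' - q x'| + ∑ z ∈ Finset.univ.erase x', |p z - q z|
        ≤ |p x' - q x'| + ((1 - p x') + (1 - q x')) := by linarith
      _ < ((n : ℝ) - 1) * ε + 2 * ((n : ℝ) * ε) := by linarith
  have : (1 / 2 : ℝ) * (∑ z : Fin n → V, |p z - q z|)
      < (3 * (n : ℝ) - 1) * ε / 2 := by linarith
  simpa [hqdef] using this
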